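/- Let ω ∈ \hat{𝒟} and let T: A²_ω → A²_ω be a positive bounded linear operator. Then T is trace class if and only if ∫_𝔻 \tilde{T}(z)·‖B^ω_z‖²_{A²_ω}·ω(z) dA(z) < ∞, and in that case the trace of T equals ∫_𝔻 \tilde{T}(z)·‖B^ω_z‖²_{A²_ω}·ω(z) dA(z), where \tilde{T}(z)=⟨T(b^ω_z), b^ω_z⟩_{A²_ω} is the Berezin transform. -/

import Mathlib

open MeasureTheory Set
open scoped ComplexInnerProductSpace

private lemma parseval_abs_sq {H : Type*} [NormedAddCommGroup H] [InnerProductSpace ℂ H]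
    [CompleteSpace H] (b : HilbertBasis ℕ ℂ H) (x : H) :
    HasSum (fun n => ‖⟪b n, x⟫‖ ^ 2) (‖x‖ ^ 2) := by
  have h2 := (b.hasSum_inner_mul_inner x x).mapL Complex.reCLM
  convert h2 using 1
  · funext n
    show ‖⟪b n, x⟫‖ ^ 2 = Complex.reCLM (⟪x, b n⟫ * ⟪b n, x⟫)
    rw [show (⟪x, b n⟫ : ℂ) = (starRingEnd ℂ) ⟪b n, x⟫ from (inner_conj_symm _ _).symm]
    generalize (⟪b n, x⟫ : ℂ) = w
    simp [Complex.sq_norm, Complex.normSq_apply, Complex.mul_re]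
  · show ‖x‖ ^ 2 = Complex.reCLM (⟪x, x⟫ : ℂ)
    have := inner_self_eq_norm_sq (𝕜 := ℂ) x
    rw [RCLike.re_to_complex] at this
    exact this.symm

/-- Trace formula for positive operators on `A²_ω`, `ω ∈ 𝒟̂`: a positive operator
`T` on the reproducing kernel Hilbert space `A²_ω` (modelled abstractly by `H`,
an embedding `e` into functions, and kernels `B z`) is trace class if and only if
`∫_𝔻 T̃(z) ‖B_z‖² ω(z) dA(z) < ∞`, in which case the trace equals this integral.
Here `T̃(z) = ⟨T b_z, b_z⟩` with `b_z = B z/‖B z‖`. -/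
theorem stmt_17 (ω : ℝ → ℝ)
    (hnn : ∀ r ∈ Set.Ico (0:ℝ) 1, 0 ≤ ω r)
    (hint : MeasureTheory.IntegrableOn ω (Set.Ioc (0:ℝ) 1))
    (hpos : ∀ r ∈ Set.Ico (0:ℝ) 1, 0 < ∫ s in Set.Ioc r 1, ω s)
    (hD : ∃ C : ℝ, 1 ≤ C ∧ ∀ r ∈ Set.Ico (0:ℝ) 1,
      (∫ s in Set.Ioc r 1, ω s) ≤ C * ∫ s in Set.Ioc ((1 + r) / 2) 1, ω s)
    {H : Type*} [NormedAddCommGroup H] [InnerProductSpace ℂ H] [CompleteSpace H]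
    (e : H →ₗ[ℂ] (ℂ → ℂ)) (B : ℂ → H)
    (hrep : ∀ (f : H) (z : ℂ), ‖z‖ < 1 → e f z = ⟪B z, f⟫)
    (hnormH : ∀ f : H, (‖f‖ : ℝ) ^ 2 =
      (Real.pi)⁻¹ * ∫ z in Metric.ball (0:ℂ) 1, ‖e f z‖ ^ 2 * ω ‖z‖)
    (hBnz : ∀ z : ℂ, ‖z‖ < 1 → B z ≠ 0)
    (T : H →L[ℂ] H) (hT : T.IsPositive)
    (b : HilbertBasis ℕ ℂ H) :
    ((Summable fun n : ℕ => (⟪b n, T (b n)⟫).re) ↔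
      MeasureTheory.IntegrableOn
        (fun z : ℂ => (⟪(‖B z‖)⁻¹ • B z, T ((‖B z‖)⁻¹ • B z)⟫).re * ‖B z‖ ^ 2 * ω ‖z‖)
        (Metric.ball (0:ℂ) 1)) ∧
    ((Summable fun n : ℕ => (⟪b n, T (b n)⟫).re) →
      (∑' n : ℕ, (⟪b n, T (b n)⟫).re) =
        (Real.pi)⁻¹ * ∫ z in Metric.ball (0:ℂ) 1,
          (⟪(‖B z‖)⁻¹ • B z, T ((‖B z‖)⁻¹ • B z)⟫).re * ‖B z‖ ^ 2 * ω ‖z‖) := by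
  classical
  -- square root of T
  obtain ⟨S, hSadj, hSS⟩ : ∃ S : H →L[ℂ] H, ContinuousLinearMap.adjoint S = S ∧ S * S = T := by
    refine ⟨CFC.sqrt T, ?_, ?_⟩
    · exact ContinuousLinearMap.isSelfAdjoint_iff'.mp (IsSelfAdjoint.of_nonneg (CFC.sqrt_nonneg T))
    · rw [← sq, CFC.sq_sqrt T ((T.nonneg_iff_isPositive).mpr hT)]
  have hTinner : ∀ x : H, (⟪x, T x⟫).re = ‖S x‖ ^ 2 := by
    intro x
    have h : ⟪x, T x⟫ = ⟪S x, S x⟫ := by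
      rw [← hSS, ContinuousLinearMap.mul_apply,
        ← ContinuousLinearMap.adjoint_inner_left S (S x) x, hSadj]
    rw [h]
    have := inner_self_eq_norm_sq (𝕜 := ℂ) (S x)
    rwa [RCLike.re_to_complex] at this
  set a : ℕ → ℝ := fun n => ‖S (b n)‖ ^ 2 with ha_def
  have ha : ∀ n, 0 ≤ a n := fun n => sq_nonneg _
  -- the functions G n
  set G : ℕ → ℂ → ℝ := fun n z => ‖e (S (b n)) z‖ ^ 2 * ω ‖z‖ with hG_def
  have hGnn : ∀ n, ∀ z ∈ Metric.ball (0:ℂ) 1, 0 ≤ G n z := by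
    intro n z hz
    have hz' : ‖z‖ < 1 := by simpa using mem_ball_zero_iff.mp hz
    exact mul_nonneg (sq_nonneg _) (hnn _ ⟨norm_nonneg _, hz'⟩)
  set μ := volume.restrict (Metric.ball (0:ℂ) 1) with hμ_def
  have hGnn_ae : ∀ n, 0 ≤ᵐ[μ] G n := fun n =>
    ae_restrict_of_forall_mem measurableSet_ball (hGnn n)
  have hGint : ∀ n, Integrable (G n) μ := by
    intro n
    by_cases h0 : S (b n) = 0
    · have hGz : G n = fun _ => 0 := by
        funext z; simp [hG_def, h0, map_zero]
      rw [hGz]; exact integrable_zero _ _ _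
    · by_contra hni
      have h1 := hnormH (S (b n))
      rw [integral_undef hni, mul_zero] at h1
      exact h0 (norm_eq_zero.mp (pow_eq_zero_iff two_ne_zero |>.mp h1))
  have hGa : ∀ n, ∫ z, G n z ∂μ = Real.pi * a n := by
    intro n
    have h1 := hnormH (S (b n))
    rw [ha_def]
    simp only []
    rw [show ‖S (b n)‖ ^ 2 = (Real.pi)⁻¹ * ∫ z, G n z ∂μ from h1]
    field_simp
  -- pointwise Parseval identity
  have hkey : ∀ z : ℂ, ‖z‖ < 1 → HasSum (fun n => G n z) (‖S (B z)‖ ^ 2 * ω ‖z‖) := by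
    intro z hz
    have hp := (parseval_abs_sq b (S (B z))).mul_right (ω ‖z‖)
    have hfun : ∀ n, ‖⟪b n, S (B z)⟫‖ ^ 2 * ω ‖z‖ = G n z := by
      intro n
      have h1 : (⟪b n, S (B z)⟫ : ℂ) = (starRingEnd ℂ) (e (S (b n)) z) := by
        rw [hrep (S (b n)) z hz, inner_conj_symm,
          ← ContinuousLinearMap.adjoint_inner_left S (B z) (b n), hSadj]
      rw [h1, hG_def]
      simp
    exact (funext hfun : _) ▸ hp
  -- the integrand g
  set g : ℂ → ℝ := fun z =>
    (⟪(‖B z‖)⁻¹ • B z, T ((‖B z‖)⁻¹ • B z)⟫).re * ‖B z‖ ^ 2 * ω ‖z‖ with hg_def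
  have hg : ∀ z ∈ Metric.ball (0:ℂ) 1, g z = ‖S (B z)‖ ^ 2 * ω ‖z‖ := by
    intro z hz
    have hz' : ‖z‖ < 1 := mem_ball_zero_iff.mp hz
    have hB : ‖B z‖ ≠ 0 := norm_ne_zero_iff.mpr (hBnz z hz')
    have hin : (⟪(‖B z‖)⁻¹ • B z, T ((‖B z‖)⁻¹ • B z)⟫).re
        = (‖B z‖)⁻¹ ^ 2 * (⟪B z, T (B z)⟫).re := by
      rw [T.map_smul_of_tower, ← Complex.coe_smul, ← Complex.coe_smul, inner_smul_left,
        inner_smul_right, Complex.conj_ofReal, ← mul_assoc, ← Complex.ofReal_mul,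
        Complex.re_ofReal_mul]
      ring
    rw [hg_def]
    simp only []
    rw [hin, hTinner]
    field_simp
  -- lintegral computations
  have hGm : ∀ n, AEMeasurable (fun z => ENNReal.ofReal (G n z)) μ := fun n =>
    ENNReal.measurable_ofReal.comp_aemeasurable (hGint n).aemeasurable
  have hlGn : ∀ n, ∫⁻ z, ENNReal.ofReal (G n z) ∂μ = ENNReal.ofReal (Real.pi * a n) := by
    intro n
    rw [← ofReal_integral_eq_lintegral_ofReal (hGint n) (hGnn_ae n), hGa n]
  set γ : ℂ → ENNReal := fun z => ∑' n, ENNReal.ofReal (G n z) with hγ_def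
  have hγae : AEMeasurable γ μ := AEMeasurable.ennreal_tsum hGm
  have hγint : ∫⁻ z, γ z ∂μ = ENNReal.ofReal Real.pi * ∑' n, ENNReal.ofReal (a n) := by
    rw [hγ_def]
    rw [lintegral_tsum hGm]
    simp_rw [hlGn]
    rw [← ENNReal.tsum_mul_left]
    congr 1
    funext n
    rw [ENNReal.ofReal_mul Real.pi_pos.le]
  have hγg : ∀ z ∈ Metric.ball (0:ℂ) 1, ENNReal.ofReal (g z) = γ z := by
    intro z hz
    have hz' : ‖z‖ < 1 := mem_ball_zero_iff.mp hz
    rw [hg z hz, ← (hkey z hz').tsum_eq, hγ_def]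
    exact ENNReal.ofReal_tsum_of_nonneg (fun n => hGnn n z hz) (hkey z hz').summable
  have hγg_ae : (fun z => ENNReal.ofReal (g z)) =ᵐ[μ] γ :=
    ae_restrict_of_forall_mem measurableSet_ball hγg
  have hgnn : 0 ≤ᵐ[μ] g := by
    refine ae_restrict_of_forall_mem measurableSet_ball (fun z hz => ?_)
    have hz' : ‖z‖ < 1 := mem_ball_zero_iff.mp hz
    rw [hg z hz]
    exact mul_nonneg (sq_nonneg _) (hnn _ ⟨norm_nonneg _, hz'⟩)
  have hgm : AEStronglyMeasurable g μ := by
    have h1 : AEMeasurable (fun z => (γ z).toReal) μ :=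
      ENNReal.measurable_toReal.comp_aemeasurable hγae
    refine (AEMeasurable.aestronglyMeasurable h1).congr ?_
    refine ae_restrict_of_forall_mem measurableSet_ball (fun z hz => ?_)
    show (γ z).toReal = g z
    rw [← hγg z hz, ENNReal.toReal_ofReal]
    have hz' : ‖z‖ < 1 := mem_ball_zero_iff.mp hz
    rw [hg z hz]
    exact mul_nonneg (sq_nonneg _) (hnn _ ⟨norm_nonneg _, hz'⟩)
  have hlg : ∫⁻ z, ENNReal.ofReal (g z) ∂μ
      = ENNReal.ofReal Real.pi * ∑' n, ENNReal.ofReal (a n) :=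
    (lintegral_congr_ae hγg_ae).trans hγint
  -- main equivalences
  have hsum_eq : (fun n : ℕ => (⟪b n, T (b n)⟫).re) = a := funext fun n => hTinner (b n)
  constructor
  · rw [hsum_eq]
    constructor
    · intro hs
      have htop : (∑' n, ENNReal.ofReal (a n)) ≠ ⊤ := by
        rw [← ENNReal.ofReal_tsum_of_nonneg ha hs]
        exact ENNReal.ofReal_ne_top
      refine ⟨hgm, (hasFiniteIntegral_iff_ofReal hgnn).mpr ?_⟩
      rw [hlg]
      exact ENNReal.mul_lt_top ENNReal.ofReal_lt_top htop.lt_top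
    · intro hInt
      have hfin := (hasFiniteIntegral_iff_ofReal hgnn).mp hInt.hasFiniteIntegral
      rw [hlg] at hfin
      have htop : (∑' n, ENNReal.ofReal (a n)) ≠ ⊤ := by
        intro hc
        rw [hc, ENNReal.mul_top (by simp [Real.pi_pos])] at hfin
        exact (lt_irrefl _ hfin).elim
      have := ENNReal.summable_toReal htop
      refine this.congr (fun n => ?_)
      rw [ENNReal.toReal_ofReal (ha n)]
  · intro hs
    rw [hsum_eq] at hs ⊢
    have htop : (∑' n, ENNReal.ofReal (a n)) = ENNReal.ofReal (∑' n, a n) :=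
      (ENNReal.ofReal_tsum_of_nonneg ha hs).symm
    have hInt : ∫ z, g z ∂μ = Real.pi * ∑' n, a n := by
      rw [integral_eq_lintegral_of_nonneg_ae hgnn hgm, hlg, htop,
        ← ENNReal.ofReal_mul Real.pi_pos.le, ENNReal.toReal_ofReal]
      exact mul_nonneg Real.pi_pos.le (tsum_nonneg ha)
    rw [show (∫ z in Metric.ball (0:ℂ) 1,
        (⟪(‖B z‖)⁻¹ • B z, T ((‖B z‖)⁻¹ • B z)⟫).re * ‖B z‖ ^ 2 * ω ‖z‖) = ∫ z, g z ∂μ from rfl,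
      hInt, ← mul_assoc, inv_mul_cancel₀ Real.pi_ne_zero, one_mul]
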